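/- Let N be a nilpotent subgroup of SL(2, ℝ) such that every element A ∈ N has a fixed point in the upper half-plane ℍ under the Möbius action (there exists z ∈ ℍ with A • z = z). Then there exists a common fixed point: some z₀ ∈ ℍ with A • z₀ = z₀ for every A ∈ N. -/

import Mathlib

open UpperHalfPlane MatrixGroups

section Aux

/-- A nontrivial nilpotent group has a nontrivial central element. -/
lemma exists_center_ne_one (G : Type*) [Group G] [Group.IsNilpotent G] [Nontrivial G] :
    ∃ x : G, x ≠ 1 ∧ ∀ g : G, g * x = x * g := by
  by_contra hcon
  push_neg at hcon
  have hcbot : Subgroup.center G = ⊥ := by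
    rw [eq_bot_iff]
    intro x hx
    rw [Subgroup.mem_center_iff] at hx
    rw [Subgroup.mem_bot]
    by_contra hx1
    obtain ⟨g, hg⟩ := hcon x hx1
    exact hg (hx g)
  have hall : ∀ n, Subgroup.upperCentralSeries G n = ⊥ := by
    intro n
    induction n with
    | zero => simp
    | succ n ih =>
      rw [eq_bot_iff]
      intro x hx
      rw [mem_upperCentralSeries_succ_iff] at hx
      have hxc : x ∈ Subgroup.center G := by
        rw [Subgroup.mem_center_iff]
        intro g
        have h1 := hx g
        rw [ih, Subgroup.mem_bot] at h1
        calc g * x = (x * g * x⁻¹ * g⁻¹)⁻¹ * (x * g) := by group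
          _ = 1⁻¹ * (x * g) := by rw [← h1, commutatorElement_def]
          _ = x * g := by group
      rw [hcbot, Subgroup.mem_bot] at hxc
      exact hxc
  obtain ⟨n, hn⟩ := Group.IsNilpotent.nilpotent (G := G)
  have hbt : (⊥ : Subgroup G) = ⊤ := by rw [← hall n, hn]
  obtain ⟨a, b, hab⟩ := exists_pair_ne G
  have ha : a ∈ (⊥ : Subgroup G) := hbt ▸ Subgroup.mem_top a
  have hb : b ∈ (⊥ : Subgroup G) := hbt ▸ Subgroup.mem_top b
  rw [Subgroup.mem_bot] at ha hb
  exact hab (by rw [ha, hb])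

/-- The subgroup {1, -1} of SL(2, ℝ). -/
def pmOne : Subgroup SL(2, ℝ) where
  carrier := {1, -1}
  one_mem' := Or.inl rfl
  mul_mem' := by
    rintro a b (rfl | rfl) (rfl | rfl) <;> simp
  inv_mem' := by
    rintro a (rfl | rfl) <;> simp

lemma mem_pmOne_iff {g : SL(2, ℝ)} : g ∈ pmOne ↔ g = 1 ∨ g = -1 := Iff.rfl

lemma sl2_denom_ne_zero (g : SL(2, ℝ)) (z : ℍ) :
    ((g 1 0 : ℂ) * z + (g 1 1 : ℂ)) ≠ 0 := by
  intro h
  have him : (g 1 0 : ℝ) * (z : ℂ).im = 0 := by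
    have h1 := congrArg Complex.im h
    simpa using h1
  have hc : (g 1 0 : ℝ) = 0 := by
    rcases mul_eq_zero.mp him with h' | h'
    · exact h'
    · exact absurd h' (ne_of_gt z.2)
  have hd : (g 1 1 : ℝ) = 0 := by
    have h1 := congrArg Complex.re h
    rw [hc] at h1
    simpa using h1
  have hdet := g.2
  rw [Matrix.det_fin_two] at hdet
  rw [hc, hd] at hdet
  simp at hdet

lemma sl2_smul_coe (g : SL(2, ℝ)) (z : ℍ) :
    ((g • z : ℍ) : ℂ) = ((g 0 0 : ℂ) * z + (g 0 1 : ℂ)) / ((g 1 0 : ℂ) * z + (g 1 1 : ℂ)) := by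
  rw [UpperHalfPlane.specialLinearGroup_apply]
  simp

lemma sl2_smul_eq_iff (g : SL(2, ℝ)) (z : ℍ) :
    g • z = z ↔ (g 0 0 : ℂ) * z + (g 0 1 : ℂ) = ((g 1 0 : ℂ) * z + (g 1 1 : ℂ)) * z := by
  constructor
  · intro h
    have hc := congrArg UpperHalfPlane.coe h
    rw [sl2_smul_coe] at hc
    rw [div_eq_iff (sl2_denom_ne_zero g z)] at hc
    rw [hc]; ring
  · intro h
    apply UpperHalfPlane.ext
    rw [sl2_smul_coe, div_eq_iff (sl2_denom_ne_zero g z), h]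
    ring

lemma pm_one_smul {g : SL(2, ℝ)} (hg : g = 1 ∨ g = -1) (z : ℍ) : g • z = z := by
  rw [sl2_smul_eq_iff]
  rcases hg with rfl | rfl <;>
    simp [Matrix.SpecialLinearGroup.coe_one, Matrix.SpecialLinearGroup.coe_neg,
      Matrix.one_apply, Matrix.neg_apply]

/-- Uniqueness of the fixed point for an element that is not ±1. -/
lemma sl2_fixed_unique {g : SL(2, ℝ)} (h1 : g ≠ 1) (hneg : g ≠ -1) {z w : ℍ}
    (hz : g • z = z) (hw : g • w = w) : z = w := by
  rw [sl2_smul_eq_iff] at hz hw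
  by_contra hzw
  have hne : (z : ℂ) - (w : ℂ) ≠ 0 :=
    sub_ne_zero.mpr (fun hc => hzw (UpperHalfPlane.ext hc))
  have hfac : ((z : ℂ) - w) * (g 0 0 : ℂ) =
      ((z : ℂ) - w) * ((g 1 0 : ℂ) * ((z : ℂ) + w) + (g 1 1 : ℂ)) := by
    linear_combination hz - hw
  have key : (g 0 0 : ℂ) = (g 1 0 : ℂ) * ((z : ℂ) + w) + (g 1 1 : ℂ) :=
    mul_left_cancel₀ hne hfac
  have him := congrArg Complex.im key
  simp at him
  -- him : 0 = g 1 0 * ((z:ℂ).im + (w:ℂ).im)  (up to simp normal form)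
  have hc0 : (g 1 0 : ℝ) = 0 := by
    have hz2 := z.2
    have hw2 := w.2
    rcases him with h' | h'
    · exact h'
    · nlinarith [z.im_pos, w.im_pos]
  have had : (g 0 0 : ℝ) = (g 1 1 : ℝ) := by
    have hre := congrArg Complex.re key
    rw [hc0] at hre
    simpa using hre
  have hb0 : (g 0 1 : ℝ) = 0 := by
    have : (g 0 1 : ℂ) = 0 := by
      have hc0' : (g 1 0 : ℂ) = 0 := by exact_mod_cast congrArg (Complex.ofReal) hc0
      have had' : (g 0 0 : ℂ) = (g 1 1 : ℂ) := by exact_mod_cast congrArg (Complex.ofReal) had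
      linear_combination hz - z * had' + z * z * hc0'
    exact_mod_cast this
  have hdet := g.2
  rw [Matrix.det_fin_two] at hdet
  rw [hc0, hb0, ← had] at hdet
  simp at hdet
  rcases mul_self_eq_one_iff.mp hdet with ha | ha
  · apply h1
    apply Matrix.SpecialLinearGroup.ext
    intro i j
    fin_cases i <;> fin_cases j <;>
      simp [ha, hb0, hc0, ← had, Matrix.SpecialLinearGroup.coe_one, Matrix.one_apply]
  · apply hneg
    apply Matrix.SpecialLinearGroup.ext
    intro i j
    fin_cases i <;> fin_cases j <;>
      simp [ha, hb0, hc0, ← had, Matrix.SpecialLinearGroup.coe_one,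
        Matrix.SpecialLinearGroup.coe_neg, Matrix.one_apply, Matrix.neg_apply]

end Aux

/-- a nilpotent subgroup of SL(2, ℝ) all of whose elements have a
fixed point in the upper half-plane has a common fixed point. -/
theorem stmt_9 (N : Subgroup SL(2, ℝ)) [Group.IsNilpotent N]
    (hfix : ∀ A ∈ N, ∃ z : ℍ, A • z = z) :
    ∃ z₀ : ℍ, ∀ A ∈ N, A • z₀ = z₀ := by
  by_cases htriv : ∀ A ∈ N, A = 1 ∨ A = -1
  · exact ⟨UpperHalfPlane.I, fun A hA => pm_one_smul (htriv A hA) _⟩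
  push_neg at htriv
  obtain ⟨A₀, hA₀N, hA₀1, hA₀neg⟩ := htriv
  let K : Subgroup N := Subgroup.comap N.subtype pmOne
  have hmemK : ∀ k : N, k ∈ K ↔ ((k : SL(2, ℝ)) = 1 ∨ (k : SL(2, ℝ)) = -1) := fun k => Iff.rfl
  haveI hKnormal : K.Normal := by
    constructor
    intro k hk g
    rw [hmemK] at hk ⊢
    rcases hk with h | h
    · left
      push_cast [h]
      group
    · right
      push_cast [h]
      simp [mul_comm]
  haveI : Nontrivial (N ⧸ K) := by
    refine nontrivial_of_ne (QuotientGroup.mk (⟨A₀, hA₀N⟩ : N)) 1 ?_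
    rw [Ne, QuotientGroup.eq_one_iff, hmemK]
    push_neg
    exact ⟨hA₀1, hA₀neg⟩
  obtain ⟨xb, hxb1, hxbc⟩ := exists_center_ne_one (N ⧸ K)
  obtain ⟨x, rfl⟩ := QuotientGroup.mk_surjective xb
  have hxK : x ∉ K := fun h => hxb1 ((QuotientGroup.eq_one_iff x).mpr h)
  have hx1 : (x : SL(2, ℝ)) ≠ 1 := fun h => hxK ((hmemK x).mpr (Or.inl h))
  have hxneg : (x : SL(2, ℝ)) ≠ -1 := fun h => hxK ((hmemK x).mpr (Or.inr h))
  obtain ⟨z₀, hz₀⟩ := hfix (x : SL(2, ℝ)) x.2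
  refine ⟨z₀, fun A hA => ?_⟩
  set g : N := ⟨A, hA⟩ with hg
  have hcomm : g * x * g⁻¹ * x⁻¹ ∈ K := by
    rw [← QuotientGroup.eq_one_iff]
    have : (QuotientGroup.mk (g * x * g⁻¹ * x⁻¹) : N ⧸ K) =
        QuotientGroup.mk g * QuotientGroup.mk x * (QuotientGroup.mk g)⁻¹ *
          (QuotientGroup.mk x)⁻¹ := rfl
    rw [this, hxbc (QuotientGroup.mk g)]
    group
  rw [hmemK] at hcomm
  set ε : SL(2, ℝ) := ((g * x * g⁻¹ * x⁻¹ : N) : SL(2, ℝ)) with hε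
  have hεc : A * (x : SL(2, ℝ)) * A⁻¹ * (x : SL(2, ℝ))⁻¹ = ε := by
    rw [hε]; push_cast; rfl
  have hXA : (x : SL(2, ℝ)) * A = ε⁻¹ * (A * (x : SL(2, ℝ))) := by
    rw [← hεc]; group
  have hεinv : ε⁻¹ = 1 ∨ ε⁻¹ = -1 := by
    rcases hcomm with h | h
    · left; rw [h]; exact inv_one
    · right; rw [h]; simp
  have hfixA : (x : SL(2, ℝ)) • (A • z₀) = A • z₀ := by
    rw [← mul_smul, hXA, mul_smul, mul_smul, hz₀, pm_one_smul hεinv]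
  exact sl2_fixed_unique hx1 hxneg hfixA hz₀
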